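/- In the parallel edge reduction of a PBDTP network (removal of a trivalent white vertex and a trivalent black vertex joined by two parallel edges of weights $w_2, w_3$, with incoming edge $e_1$ of weight $w_1$ into the white vertex and outgoing edge $e_4$ of weight $w_4$ out of the black vertex), the edge vectors satisfy $E_1 = (-1)^{\mathrm{int}(e_1)+\mathrm{int}(e_2)} w_1(w_2+w_3) E_4$, $E_2 = (-1)^{\mathrm{int}(e_2)} w_2 E_4$, $E_3 = (-1)^{\mathrm{int}(e_2)} w_3 E_4$, and the reduced edge has weight $\tilde{w}_1 = w_1(w_2+w_3)w_4$ with unchanged edge vector $\tilde{E}_1 = E_1$. -/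
import Mathlib

/-- (The parallel edge reduction (R1).)  Edge `e₁` of weight `w₁` enters the
white vertex `U`; two parallel edges `e₂, e₃` of weights `w₂, w₃` go from `U` to the black
vertex `V`; edge `e₄` of weight `w₄` leaves `V`, and `F` is the vector following `e₄`
(`E₄ = (-1)^{int(e₄)} w₄ F`).  With all the local winding numbers equal to zero and
`int(e₂) = int(e₃)`, the geometric relations give
`E₁ = (-1)^{int(e₁)+int(e₂)} w₁ (w₂+w₃) E₄`, `E₂ = (-1)^{int(e₂)} w₂ E₄`,
`E₃ = (-1)^{int(e₂)} w₃ E₄`; the reduced edge has weight `w̃₁ = w₁(w₂+w₃)w₄`, intersection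
number `int(ẽ₁) = int(e₁)+int(e₂)+int(e₄)`, and unchanged edge vector `Ẽ₁ = E₁`. -/
theorem parallel_edge_reduction {Vc : Type*} [AddCommGroup Vc] [Module ℝ Vc]
    (E1 E2 E3 E4 F tE1 : Vc) (w1 w2 w3 w4 tw1 : ℝ) (i1 i2 i4 : ℕ)
    (hw1 : 0 < w1) (hw2 : 0 < w2) (hw3 : 0 < w3) (hw4 : 0 < w4)
    (hwhite : E1 = ((-1 : ℝ) ^ i1 * w1) • (E2 + E3))
    (hblack2 : E2 = ((-1 : ℝ) ^ i2 * w2) • E4)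
    (hblack3 : E3 = ((-1 : ℝ) ^ i2 * w3) • E4)
    (hnext : E4 = ((-1 : ℝ) ^ i4 * w4) • F)
    (htw : tw1 = w1 * (w2 + w3) * w4)
    (htE : tE1 = ((-1 : ℝ) ^ (i1 + i2 + i4) * tw1) • F) :
    E1 = ((-1 : ℝ) ^ (i1 + i2) * (w1 * (w2 + w3))) • E4 ∧
    E2 = ((-1 : ℝ) ^ i2 * w2) • E4 ∧
    E3 = ((-1 : ℝ) ^ i2 * w3) • E4 ∧
    tE1 = E1 := by
  subst hwhite hblack2 hblack3 hnext htw htE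
  refine ⟨?_, rfl, rfl, ?_⟩ <;>
  · simp only [smul_smul, ← smul_add, ← add_smul, pow_add]
    ring_nf
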